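/- arXiv:1807.02695 — 2 statements merged into one kernel-verified Lean document; each statement's English description precedes it below -/
import Mathlib

section
/- If G is a finite simple graph without isolated vertices, then γ_Zg(G) ≤ γ_g(G). -/
/- Formalization of the domination games from "The variety of domination games".

A game is specified by a legality predicate `legal : List V → V → Prop`, where the list
records the previously played vertices (most recent first).  Players alternate moves;
each move must be legal; the game ends when no legal move exists.  Dominator wants to
minimize, Staller to maximize, the total number of moves.

`canEnd legal k turn h` states that, with history `h` and the player to move given by
`turn` (`true` = Dominator), Dominator can guarantee that at most `k` further moves are
played (against any play of Staller).  The value of the game under optimal play by both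
players is then the least such `k` from the empty history. -/

/-- The closed neighborhood `N[v]` of a vertex. -/
def closedNbhd {V : Type*} (G : SimpleGraph V) (v : V) : Set V :=
  insert v (G.neighborSet v)

/-- `⋃_{u ∈ h} N[u]` : the set of vertices dominated by the moves in `h`. -/
def dominatedBy {V : Type*} (G : SimpleGraph V) (h : List V) : Set V :=
  ⋃ u ∈ h, closedNbhd G u

/-- `⋃_{u ∈ h} N(u)` : the set of vertices totally dominated by the moves in `h`. -/
def totDominatedBy {V : Type*} (G : SimpleGraph V) (h : List V) : Set V :=
  ⋃ u ∈ h, G.neighborSet u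

/-- Legality in the domination game: `N[v] \ ⋃_{j<i} N[v_j] ≠ ∅`. -/
def dgLegal {V : Type*} (G : SimpleGraph V) (h : List V) (v : V) : Prop :=
  (closedNbhd G v \ dominatedBy G h).Nonempty

/-- Legality in the total domination game: `N(v) \ ⋃_{j<i} N(v_j) ≠ ∅`. -/
def tgLegal {V : Type*} (G : SimpleGraph V) (h : List V) (v : V) : Prop :=
  (G.neighborSet v \ totDominatedBy G h).Nonempty

/-- Legality in the Z-domination game on `G|A`: `N(v) \ (A ∪ ⋃_{j<i} N[v_j]) ≠ ∅`. -/
def zLegal {V : Type*} (G : SimpleGraph V) (A : Set V) (h : List V) (v : V) : Prop :=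
  (G.neighborSet v \ (A ∪ dominatedBy G h)).Nonempty

/-- Legality in the LL-domination game on `G|A`: `N[v] \ (A ∪ ⋃_{j<i} N(v_j)) ≠ ∅`. -/
def llLegal {V : Type*} (G : SimpleGraph V) (A : Set V) (h : List V) (v : V) : Prop :=
  (closedNbhd G v \ (A ∪ totDominatedBy G h)).Nonempty

/-- Legality in the L-domination game on `G|A`: as in the LL-game, and moreover no vertex
may be played twice. -/
def lLegal {V : Type*} (G : SimpleGraph V) (A : Set V) (h : List V) (v : V) : Prop :=
  llLegal G A h v ∧ v ∉ h

/-- `canEnd legal k turn h` : with previously played vertices `h` and the player to move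
given by `turn` (`true` = Dominator, `false` = Staller), Dominator has a strategy
guaranteeing that at most `k` further moves are made. -/
def canEnd {V : Type*} (legal : List V → V → Prop) : ℕ → Bool → List V → Prop
  | 0, _, h => ∀ v, ¬ legal h v
  | k+1, true, h => (∀ v, ¬ legal h v) ∨ ∃ v, legal h v ∧ canEnd legal k false (v :: h)
  | k+1, false, h => ∀ v, legal h v → canEnd legal k true (v :: h)

/-- The number of moves in the game with legality predicate `legal` when both players play
optimally (Dominator minimizing, Staller maximizing the number of moves); `dFirst = true`
means Dominator makes the first move. -/
noncomputable def gameVal {V : Type*} (legal : List V → V → Prop) (dFirst : Bool) : ℕ :=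
  sInf {k | canEnd legal k dFirst []}

/-- The game Z-domination number `γ_Zg(G|A)` (Dominator starts). -/
noncomputable def gammaZgA {V : Type*} (G : SimpleGraph V) (A : Set V) : ℕ :=
  gameVal (zLegal G A) true

/-- The Staller-start game Z-domination number `γ'_Zg(G|A)`. -/
noncomputable def gammaZgA' {V : Type*} (G : SimpleGraph V) (A : Set V) : ℕ :=
  gameVal (zLegal G A) false

/-- The game L-domination number `γ_Lg(G|A)` (Dominator starts). -/
noncomputable def gammaLgA {V : Type*} (G : SimpleGraph V) (A : Set V) : ℕ :=
  gameVal (lLegal G A) true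

/-- The Staller-start game L-domination number `γ'_Lg(G|A)`. -/
noncomputable def gammaLgA' {V : Type*} (G : SimpleGraph V) (A : Set V) : ℕ :=
  gameVal (lLegal G A) false

/-- The game LL-domination number `γ_LLg(G|A)` (Dominator starts). -/
noncomputable def gammaLLgA {V : Type*} (G : SimpleGraph V) (A : Set V) : ℕ :=
  gameVal (llLegal G A) true

/-- The Staller-start game LL-domination number `γ'_LLg(G|A)`. -/
noncomputable def gammaLLgA' {V : Type*} (G : SimpleGraph V) (A : Set V) : ℕ :=
  gameVal (llLegal G A) false

/-- The game domination number `γ_g(G)` (Dominator starts). -/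
noncomputable def gammaG {V : Type*} (G : SimpleGraph V) : ℕ :=
  gameVal (dgLegal G) true

/-- The game total domination number `γ_tg(G)` (Dominator starts). -/
noncomputable def gammaTg {V : Type*} (G : SimpleGraph V) : ℕ :=
  gameVal (tgLegal G) true

/-- The game Z-domination number `γ_Zg(G)` (Dominator starts). -/
noncomputable def gammaZg {V : Type*} (G : SimpleGraph V) : ℕ := gammaZgA G ∅

/-- The Staller-start game Z-domination number `γ'_Zg(G)`. -/
noncomputable def gammaZg' {V : Type*} (G : SimpleGraph V) : ℕ := gammaZgA' G ∅

/-- The game L-domination number `γ_Lg(G)` (Dominator starts). -/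
noncomputable def gammaLg {V : Type*} (G : SimpleGraph V) : ℕ := gammaLgA G ∅

/-- The Staller-start game L-domination number `γ'_Lg(G)`. -/
noncomputable def gammaLg' {V : Type*} (G : SimpleGraph V) : ℕ := gammaLgA' G ∅

/-- The game LL-domination number `γ_LLg(G)` (Dominator starts). -/
noncomputable def gammaLLg {V : Type*} (G : SimpleGraph V) : ℕ := gammaLLgA G ∅

/-- The Staller-start game LL-domination number `γ'_LLg(G)`. -/
noncomputable def gammaLLg' {V : Type*} (G : SimpleGraph V) : ℕ := gammaLLgA' G ∅

/-- `G` has no isolated vertices. -/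
def isolateFree {V : Type*} (G : SimpleGraph V) : Prop := ∀ v : V, ∃ u, G.Adj v u

/-- The domination number `γ(G)`. -/
noncomputable def domNum {V : Type*} (G : SimpleGraph V) : ℕ :=
  sInf {k | ∃ S : Finset V, S.card = k ∧ ∀ v : V, ∃ u ∈ S, v ∈ closedNbhd G u}

/-- The total domination number `γ_t(G)`. -/
noncomputable def totDomNum {V : Type*} (G : SimpleGraph V) : ℕ :=
  sInf {k | ∃ S : Finset V, S.card = k ∧ ∀ v : V, ∃ u ∈ S, G.Adj u v}

section ZleG
variable {V : Type*} (G : SimpleGraph V)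

lemma dominatedBy_cons (v : V) (h : List V) :
    dominatedBy G (v :: h) = closedNbhd G v ∪ dominatedBy G h := by
  ext x
  simp only [dominatedBy, Set.mem_iUnion, List.mem_cons, Set.mem_union]
  constructor
  · rintro ⟨u, rfl | hu, hx⟩
    · exact Or.inl hx
    · exact Or.inr ⟨u, hu, hx⟩
  · rintro (hx | ⟨u, hu, hx⟩)
    exacts [⟨v, Or.inl rfl, hx⟩, ⟨u, Or.inr hu, hx⟩]

lemma dgLegal_anti {h h' : List V} (hsub : dominatedBy G h ⊆ dominatedBy G h')
    {v : V} (hv : dgLegal G h' v) : dgLegal G h v := by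
  obtain ⟨x, hx1, hx2⟩ := hv
  exact ⟨x, hx1, fun hx => hx2 (hsub hx)⟩

lemma not_dgLegal {h : List V} {v : V} (hv : ¬ dgLegal G h v) :
    closedNbhd G v ⊆ dominatedBy G h := by
  intro x hx
  by_contra hxd
  exact hv ⟨x, hx, hxd⟩

lemma dom_cons_mono {h h' : List V} (hsub : dominatedBy G h ⊆ dominatedBy G h')
    (v : V) : dominatedBy G (v :: h) ⊆ dominatedBy G (v :: h') := by
  rw [dominatedBy_cons, dominatedBy_cons]
  exact Set.union_subset_union Set.Subset.rfl hsub

/-- Continuation principle for the domination game, with "pass" variants to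
handle parity. -/
lemma mono4 (k : ℕ) :
    ∀ h h' : List V, dominatedBy G h ⊆ dominatedBy G h' →
      (canEnd (dgLegal G) k true h → canEnd (dgLegal G) k true h') ∧
      (canEnd (dgLegal G) k false h → canEnd (dgLegal G) k false h') ∧
      (canEnd (dgLegal G) k false h → canEnd (dgLegal G) (k+1) true h') ∧
      (canEnd (dgLegal G) k true h → canEnd (dgLegal G) (k+1) false h') := by
  induction k with
  | zero =>
    intro h h' hsub
    refine ⟨?_, ?_, ?_, ?_⟩
    · intro hc v hv; exact hc v (dgLegal_anti G hsub hv)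
    · intro hc v hv; exact hc v (dgLegal_anti G hsub hv)
    · intro hc
      exact Or.inl (fun v hv => hc v (dgLegal_anti G hsub hv))
    · intro hc v hv
      exact absurd (dgLegal_anti G hsub hv) (hc v)
  | succ k ih =>
    intro h h' hsub
    refine ⟨?_, ?_, ?_, ?_⟩
    · -- monotone, Dominator to move
      rintro (hend | ⟨v, hv, hcv⟩)
      · exact Or.inl (fun v hv => hend v (dgLegal_anti G hsub hv))
      · by_cases hv' : dgLegal G h' v
        · exact Or.inr ⟨v, hv', (ih _ _ (dom_cons_mono G hsub v)).2.1 hcv⟩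
        · have h2 : dominatedBy G (v :: h) ⊆ dominatedBy G h' := by
            rw [dominatedBy_cons]
            exact Set.union_subset (not_dgLegal G hv') hsub
          exact (ih _ _ h2).2.2.1 hcv
    · -- monotone, Staller to move
      intro hc v hv
      exact (ih _ _ (dom_cons_mono G hsub v)).1 (hc v (dgLegal_anti G hsub hv))
    · -- pass: Staller-to-move value bounds Dominator-to-move value + 1
      intro hc
      by_cases hex : ∃ w, dgLegal G h' w
      · obtain ⟨w, hw⟩ := hex
        have hw0 : canEnd (dgLegal G) k true (w :: h) := hc w (dgLegal_anti G hsub hw)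
        exact Or.inr ⟨w, hw, (ih _ _ (dom_cons_mono G hsub w)).2.2.2 hw0⟩
      · push_neg at hex
        exact Or.inl hex
    · -- pass, other direction
      rintro (hend | ⟨v, hv, hcv⟩) s hs
      · exact absurd (dgLegal_anti G hsub hs) (hend s)
      · by_cases hv' : dgLegal G (s :: h') v
        · have hsub2 : dominatedBy G (v :: h) ⊆ dominatedBy G (v :: s :: h') := by
            refine dom_cons_mono G ?_ v
            rw [dominatedBy_cons]
            exact hsub.trans Set.subset_union_right
          exact Or.inr ⟨v, hv', (ih _ _ hsub2).2.1 hcv⟩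
        · have hsub2 : dominatedBy G (v :: h) ⊆ dominatedBy G (s :: h') := by
            rw [dominatedBy_cons]
            refine Set.union_subset (not_dgLegal G hv') ?_
            rw [dominatedBy_cons]
            exact hsub.trans Set.subset_union_right
          exact (ih _ _ hsub2).2.2.1 hcv

lemma zleg_imp_dleg {h : List V} {v : V} (hz : zLegal G ∅ h v) : dgLegal G h v := by
  obtain ⟨x, hx1, hx2⟩ := hz
  exact ⟨x, Set.mem_insert_of_mem _ hx1, fun hx => hx2 (Set.mem_union_right _ hx)⟩

/-- Simulation: any Dominator strategy in the domination game transfers to the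
Z-domination game with the same bound. -/
lemma sim (hG : isolateFree G) (k : ℕ) :
    ∀ (t : Bool) (h : List V), canEnd (dgLegal G) k t h → canEnd (zLegal G ∅) k t h := by
  induction k with
  | zero =>
    intro t h hc v hv
    exact hc v (zleg_imp_dleg G hv)
  | succ k ih =>
    intro t h hc
    cases t with
    | false =>
      intro s hs
      exact ih true _ (hc s (zleg_imp_dleg G hs))
    | true =>
      rcases hc with hend | ⟨v, hv, hcv⟩
      · exact Or.inl (fun w hw => hend w (zleg_imp_dleg G hw))
      · by_cases hz : zLegal G ∅ h v
        · exact Or.inr ⟨v, hz, ih false _ hcv⟩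
        · -- v's open neighborhood is already dominated, but v itself is not
          have hNv : G.neighborSet v ⊆ dominatedBy G h := by
            intro x hx
            by_contra hxd
            exact hz ⟨x, hx, by simp [hxd]⟩
          have hvD : v ∉ dominatedBy G h := by
            obtain ⟨x, hx1, hx2⟩ := hv
            rcases hx1 with rfl | hx
            · exact hx2
            · exact absurd (hNv hx) hx2
          obtain ⟨u, hu⟩ := hG v
          have hzu : zLegal G ∅ h u := ⟨v, hu.symm, by simp [hvD]⟩
          have hsub : dominatedBy G (v :: h) ⊆ dominatedBy G (u :: h) := by
            rw [dominatedBy_cons, dominatedBy_cons]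
            rintro x (hx | hx)
            · rcases hx with rfl | hx
              · exact Or.inl (Set.mem_insert_of_mem _ hu.symm)
              · exact Or.inr (hNv hx)
            · exact Or.inr hx
          have hcu : canEnd (dgLegal G) k false (u :: h) :=
            (mono4 G k _ _ hsub).2.1 hcv
          exact Or.inr ⟨u, hzu, ih false _ hcu⟩

/-- The domination game always ends within `|V \ dominated|` further moves. -/
lemma endgame [Fintype V] (n : ℕ) :
    ∀ (t : Bool) (h : List V), ((dominatedBy G h)ᶜ.ncard ≤ n) →
      canEnd (dgLegal G) n t h := by
  induction n with
  | zero =>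
    intro t h hn v hv
    obtain ⟨x, hx1, hx2⟩ := hv
    have hemp : (dominatedBy G h)ᶜ = ∅ := by
      rw [← Set.ncard_eq_zero (Set.toFinite _)]
      omega
    have hx : x ∈ (dominatedBy G h)ᶜ := hx2
    rw [hemp] at hx
    exact hx
  | succ n ih =>
    have key : ∀ (h : List V) (v : V), dgLegal G h v →
        ((dominatedBy G h)ᶜ.ncard ≤ n + 1) → ((dominatedBy G (v :: h))ᶜ.ncard ≤ n) := by
      intro h v hv hn
      obtain ⟨x, hx1, hx2⟩ := hv
      have hxc : x ∈ (dominatedBy G h)ᶜ := hx2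
      have hsub : (dominatedBy G (v :: h))ᶜ ⊆ (dominatedBy G h)ᶜ \ {x} := by
        intro y hy
        rw [dominatedBy_cons] at hy
        refine ⟨fun hyd => hy (Set.mem_union_right _ hyd), ?_⟩
        rintro rfl
        exact hy (Set.mem_union_left _ hx1)
      have h1 : ((dominatedBy G (v :: h))ᶜ).ncard ≤ ((dominatedBy G h)ᶜ \ {x}).ncard :=
        Set.ncard_le_ncard hsub (Set.toFinite _)
      have h2 : ((dominatedBy G h)ᶜ \ {x}).ncard = (dominatedBy G h)ᶜ.ncard - 1 :=
        Set.ncard_diff_singleton_of_mem hxc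
      have h3 : 1 ≤ (dominatedBy G h)ᶜ.ncard :=
        (Set.ncard_pos (Set.toFinite _)).mpr ⟨x, hxc⟩
      omega
    intro t h hn
    cases t with
    | false =>
      intro v hv
      exact ih true _ (key h v hv hn)
    | true =>
      by_cases hex : ∃ v, dgLegal G h v
      · obtain ⟨v, hv⟩ := hex
        exact Or.inr ⟨v, hv, ih false _ (key h v hv hn)⟩
      · push_neg at hex
        exact Or.inl hex

end ZleG

/-- The game Z-domination number is at most the game domination number. -/
theorem gammaZg_le_gammaG {V : Type*} [Fintype V] (G : SimpleGraph V)
    (hG : isolateFree G) :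
    gammaZg G ≤ gammaG G := by
  have hne : canEnd (dgLegal G) (Fintype.card V) true [] := by
    apply endgame
    have hd : dominatedBy G ([] : List V) = ∅ := by
      simp [dominatedBy]
    rw [hd, Set.compl_empty, Set.ncard_univ, Nat.card_eq_fintype_card]
  have hmem : gammaG G ∈ {k | canEnd (dgLegal G) k true []} :=
    Nat.sInf_mem ⟨_, hne⟩
  have hz : canEnd (zLegal G ∅) (gammaG G) true [] := sim G hG _ _ _ hmem
  exact Nat.sInf_le hz
end

section
/- If G is a finite simple graph without isolated vertices, then γ_Lg(G) ≤ γ_LLg(G). -/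
lemma totDominatedBy_cons {V : Type*} (G : SimpleGraph V) (v : V) (h : List V) :
    totDominatedBy G (v :: h) = G.neighborSet v ∪ totDominatedBy G h := by
  ext x
  simp only [totDominatedBy, List.mem_cons, Set.mem_iUnion, Set.mem_union, Set.mem_setOf_eq]
  constructor
  · rintro ⟨u, ⟨(rfl | hu), hx⟩⟩
    · exact Or.inl hx
    · exact Or.inr ⟨u, hu, hx⟩
  · rintro (hx | ⟨u, hu, hx⟩)
    · exact ⟨v, Or.inl rfl, hx⟩
    · exact ⟨u, Or.inr hu, hx⟩

lemma llLegal_mono {V : Type*} (G : SimpleGraph V) {h h' : List V} (v : V)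
    (hsub : totDominatedBy G h ⊆ totDominatedBy G h') (hv : llLegal G ∅ h' v) :
    llLegal G ∅ h v := by
  obtain ⟨x, hx1, hx2⟩ := hv
  refine ⟨x, hx1, ?_⟩
  simp only [Set.empty_union, Set.mem_union] at hx2 ⊢
  exact fun hxh => hx2 (hsub hxh)

lemma mem_totDominatedBy_of_mem {V : Type*} (G : SimpleGraph V) {v : V} {h : List V}
    (hv : v ∈ h) : G.neighborSet v ⊆ totDominatedBy G h := fun x hx => by
  simp only [totDominatedBy, Set.mem_iUnion]
  exact ⟨v, hv, hx⟩

/-- Continuation lemma: Dominator's LL-game strategy transfers to the L-game. -/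
lemma key_transfer {V : Type*} (G : SimpleGraph V) :
    ∀ (k : ℕ) (turn : Bool) (h h' : List V),
      totDominatedBy G h ⊆ totDominatedBy G h' →
      canEnd (llLegal G ∅) k turn h → canEnd (lLegal G ∅) k turn h' := by
  intro k
  induction k with
  | zero =>
    intro turn h h' hsub hcan v hv
    exact hcan v (llLegal_mono G v hsub hv.1)
  | succ k ih =>
    intro turn h h' hsub hcan
    cases turn with
    | false =>
      intro v hv
      have hllv : llLegal G ∅ h v := llLegal_mono G v hsub hv.1
      refine ih true (v :: h) (v :: h') ?_ (hcan v hllv)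
      rw [totDominatedBy_cons, totDominatedBy_cons]
      exact Set.union_subset_union_right _ hsub
    | true =>
      rcases hcan with hno | ⟨v, hv, hcan⟩
      · exact Or.inl fun u hu => hno u (llLegal_mono G u hsub hu.1)
      · by_cases hex : ∃ u, lLegal G ∅ h' u
        · by_cases hvl : lLegal G ∅ h' v
          · refine Or.inr ⟨v, hvl, ih false (v :: h) (v :: h') ?_ hcan⟩
            rw [totDominatedBy_cons, totDominatedBy_cons]
            exact Set.union_subset_union_right _ hsub
          · obtain ⟨u, hu⟩ := hex
            refine Or.inr ⟨u, hu, ih false (v :: h) (u :: h') ?_ hcan⟩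
            have hNv : G.neighborSet v ⊆ totDominatedBy G h' := by
              by_cases hvh : v ∈ h'
              · exact mem_totDominatedBy_of_mem G hvh
              · have hnll : ¬ llLegal G ∅ h' v := fun hll => hvl ⟨hll, hvh⟩
                rw [llLegal, Set.not_nonempty_iff_eq_empty, Set.diff_eq_empty,
                  Set.empty_union] at hnll
                exact fun x hx => hnll (Set.mem_insert_of_mem _ hx)
            rw [totDominatedBy_cons, totDominatedBy_cons]
            intro x hx
            rcases hx with hx | hx
            · exact Or.inr (hNv hx)
            · exact Or.inr (hsub hx)
        · exact Or.inl fun u hu => hex ⟨u, hu⟩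

/-- In an isolate-free graph, Dominator can end the LL-game. -/
lemma ll_terminates {V : Type*} [Fintype V] (G : SimpleGraph V) (hG : isolateFree G) :
    ∀ (m : ℕ) (h : List V), ({w | w ∉ totDominatedBy G h}).ncard ≤ m →
      canEnd (llLegal G ∅) (2 * m) true h := by
  intro m
  induction m with
  | zero =>
    intro h hm v hv
    have hempty : {w | w ∉ totDominatedBy G h} = ∅ := by
      rw [← Set.ncard_eq_zero (Set.toFinite _)]
      omega
    obtain ⟨x, _, hx2⟩ := hv
    simp only [Set.empty_union] at hx2
    have : x ∈ {w | w ∉ totDominatedBy G h} := hx2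
    rw [hempty] at this
    exact this
  | succ m ih =>
    intro h hm
    by_cases hemp : {w | w ∉ totDominatedBy G h} = ∅
    · refine Or.inl fun v hv => ?_
      obtain ⟨x, _, hx2⟩ := hv
      simp only [Set.empty_union] at hx2
      have : x ∈ {w | w ∉ totDominatedBy G h} := hx2
      rw [hemp] at this
      exact this
    · obtain ⟨w, hw⟩ := Set.nonempty_iff_ne_empty.mpr hemp
      obtain ⟨u, hu⟩ := hG w
      have hwu : w ∈ G.neighborSet u := (G.adj_comm _ _).mp hu
      have hlegal : llLegal G ∅ h u := by
        refine ⟨w, Set.mem_insert_of_mem _ hwu, ?_⟩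
        simp only [Set.empty_union]
        exact hw
      have h2 : 2 * (m + 1) = (2 * m + 1) + 1 := by ring
      rw [h2]
      refine Or.inr ⟨u, hlegal, fun v hv => ?_⟩
      apply ih
      have hsub : {x | x ∉ totDominatedBy G (v :: u :: h)} ⊆
          {x | x ∉ totDominatedBy G h} \ {w} := by
        intro x hx
        simp only [totDominatedBy_cons, Set.mem_setOf_eq, Set.mem_union, not_or] at hx
        constructor
        · exact hx.2.2
        · intro hxw
          subst hxw
          exact hx.2.1 hwu
      have h1 : {x | x ∉ totDominatedBy G (v :: u :: h)}.ncard <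
          {x | x ∉ totDominatedBy G h}.ncard :=
        lt_of_le_of_lt (Set.ncard_le_ncard hsub (Set.toFinite _))
          (Set.ncard_diff_singleton_lt_of_mem hw (Set.toFinite _))
      omega

/-- The game L-domination number is at most the game LL-domination number. -/
theorem gammaLg_le_gammaLLg {V : Type*} [Fintype V] (G : SimpleGraph V)
    (hG : isolateFree G) :
    gammaLg G ≤ gammaLLg G := by
  have hne : {k | canEnd (llLegal G ∅) k true ([] : List V)}.Nonempty := by
    refine ⟨2 * Fintype.card V, ll_terminates G hG _ _ ?_⟩
    calc ({w | w ∉ totDominatedBy G ([] : List V)}).ncard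
        ≤ (Set.univ : Set V).ncard := Set.ncard_le_ncard (Set.subset_univ _) Set.finite_univ
      _ = Fintype.card V := by rw [Set.ncard_univ, Nat.card_eq_fintype_card]
  have hmem := Nat.sInf_mem hne
  exact Nat.sInf_le (key_transfer G _ true [] [] (le_refl _) hmem)
end
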